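/- arXiv:2410.05754 — 3 statements merged into one kernel-verified Lean document; each statement's English description precedes it below -/
import Mathlib

section
/- Let Σ be a d×d Hermitian matrix and Z an n×d complex matrix. Suppose Z Z* has at least r eigenvalues ≥ a₁ > 0, and Σ has at least s eigenvalues ≥ a₂ > 0. Then Z Σ Z* has at least r + s − d eigenvalues that are ≥ a₁·a₂. -/
open Matrix Finset

namespace SandwichAux

variable {m : ℕ}

local notation "⟪" x ", " y "⟫" => @inner ℂ _ _ x y

lemma repr_toEuclideanLin {A : Matrix (Fin m) (Fin m) ℂ} (hA : A.IsHermitian)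
    (x : EuclideanSpace ℂ (Fin m)) (i : Fin m) :
    hA.eigenvectorBasis.repr (toEuclideanLin A x) i
      = hA.eigenvalues i * hA.eigenvectorBasis.repr x i := by
  rw [OrthonormalBasis.repr_apply_apply, OrthonormalBasis.repr_apply_apply,
    ← (isHermitian_iff_isSymmetric.1 hA) (hA.eigenvectorBasis i) x]
  have h := hA.mulVec_eigenvectorBasis i
  have hb : toEuclideanLin A (hA.eigenvectorBasis i)
      = hA.eigenvalues i • hA.eigenvectorBasis i := by
    apply (WithLp.equiv 2 _).injective
    simpa [toEuclideanLin_apply] using h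
  rw [hb]
  rw [show (hA.eigenvalues i • hA.eigenvectorBasis i : EuclideanSpace ℂ (Fin m))
      = ((hA.eigenvalues i : ℂ) • hA.eigenvectorBasis i) from (Complex.coe_smul _ _).symm,
    inner_smul_left]
  simp [Complex.conj_ofReal]

lemma quad_eq {A : Matrix (Fin m) (Fin m) ℂ} (hA : A.IsHermitian)
    (x : EuclideanSpace ℂ (Fin m)) :
    (⟪x, toEuclideanLin A x⟫).re
      = ∑ i, hA.eigenvalues i * ‖hA.eigenvectorBasis.repr x i‖ ^ 2 := by
  rw [← hA.eigenvectorBasis.repr.inner_map_map x (toEuclideanLin A x)]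
  rw [PiLp.inner_apply]
  rw [Complex.re_sum]
  refine Finset.sum_congr rfl fun i _ => ?_
  rw [repr_toEuclideanLin hA x i]
  simp only [RCLike.inner_apply]
  set r := hA.eigenvectorBasis.repr x i
  rw [show (hA.eigenvalues i : ℂ) * r * (starRingEnd ℂ) r
      = (hA.eigenvalues i : ℂ) * (r * (starRingEnd ℂ) r) from by ring, Complex.mul_conj]
  simp [Complex.normSq_eq_norm_sq, ← Complex.ofReal_pow]

lemma norm_sq_eq {A : Matrix (Fin m) (Fin m) ℂ} (hA : A.IsHermitian)
    (x : EuclideanSpace ℂ (Fin m)) :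
    ‖x‖ ^ 2 = ∑ i, ‖hA.eigenvectorBasis.repr x i‖ ^ 2 := by
  rw [← hA.eigenvectorBasis.repr.norm_map x, EuclideanSpace.norm_eq,
    Real.sq_sqrt (by positivity)]

lemma repr_eq_zero_of_mem_span {A : Matrix (Fin m) (Fin m) ℂ} (hA : A.IsHermitian)
    {P : Finset (Fin m)} {x : EuclideanSpace ℂ (Fin m)}
    (hx : x ∈ Submodule.span ℂ (⇑hA.eigenvectorBasis '' ↑P)) {i : Fin m} (hi : i ∉ P) :
    hA.eigenvectorBasis.repr x i = 0 := by
  induction hx using Submodule.span_induction with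
  | mem y hy =>
    obtain ⟨j, hj, rfl⟩ := hy
    rw [OrthonormalBasis.repr_self]
    have : i ≠ j := fun h => hi (h ▸ hj)
    simp [EuclideanSpace.single_apply, this]
  | zero => simp
  | add a b _ _ ha hb => simp [ha, hb]
  | smul c a _ ha => simp [ha]

lemma quad_ge {A : Matrix (Fin m) (Fin m) ℂ} (hA : A.IsHermitian)
    {P : Finset (Fin m)} {c : ℝ} (hP : ∀ i ∈ P, c ≤ hA.eigenvalues i)
    {x : EuclideanSpace ℂ (Fin m)}
    (hx : x ∈ Submodule.span ℂ (⇑hA.eigenvectorBasis '' ↑P)) :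
    c * ‖x‖ ^ 2 ≤ (⟪x, toEuclideanLin A x⟫).re := by
  rw [quad_eq hA, norm_sq_eq hA, Finset.mul_sum]
  refine Finset.sum_le_sum fun i _ => ?_
  by_cases hi : i ∈ P
  · have := hP i hi
    nlinarith [sq_nonneg ‖hA.eigenvectorBasis.repr x i‖]
  · rw [repr_eq_zero_of_mem_span hA hx hi]; simp

lemma quad_lt {A : Matrix (Fin m) (Fin m) ℂ} (hA : A.IsHermitian)
    {P : Finset (Fin m)} {c : ℝ} (hP : ∀ i ∉ P, hA.eigenvalues i < c)
    {x : EuclideanSpace ℂ (Fin m)}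
    (hx : x ∈ Submodule.span ℂ (⇑hA.eigenvectorBasis '' ↑Pᶜ)) (hx0 : x ≠ 0) :
    (⟪x, toEuclideanLin A x⟫).re < c * ‖x‖ ^ 2 := by
  rw [quad_eq hA, norm_sq_eq hA, Finset.mul_sum]
  have hex : ∃ i, hA.eigenvectorBasis.repr x i ≠ 0 := by
    by_contra h
    push_neg at h
    exact hx0 (by
      apply hA.eigenvectorBasis.repr.injective
      ext i
      simpa using h i)
  obtain ⟨i₀, hi₀⟩ := hex
  have hi₀P : i₀ ∉ P := by
    intro h
    exact hi₀ (repr_eq_zero_of_mem_span hA hx (by simpa using h))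
  refine Finset.sum_lt_sum (fun i _ => ?_) ⟨i₀, Finset.mem_univ _, ?_⟩
  · by_cases hi : i ∈ P
    · rw [repr_eq_zero_of_mem_span hA hx (by simpa using hi)]; simp
    · have := (hP i hi).le
      nlinarith [sq_nonneg ‖hA.eigenvectorBasis.repr x i‖]
  · have h1 := hP i₀ hi₀P
    have h2 : 0 < ‖hA.eigenvectorBasis.repr x i₀‖ ^ 2 :=
      pow_pos (norm_pos_iff.2 hi₀) 2
    nlinarith

lemma span_image_finset_finrank {A : Matrix (Fin m) (Fin m) ℂ} (hA : A.IsHermitian)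
    (P : Finset (Fin m)) :
    Module.finrank ℂ (Submodule.span ℂ (⇑hA.eigenvectorBasis '' ↑P)) = P.card := by
  have li : LinearIndependent ℂ
      (⇑hA.eigenvectorBasis ∘ (Subtype.val : {i // i ∈ P} → Fin m)) :=
    hA.eigenvectorBasis.orthonormal.linearIndependent.comp _ Subtype.val_injective
  have h := finrank_span_eq_card li
  rw [Set.range_comp, Subtype.range_coe_subtype, Finset.setOf_mem] at h
  rw [h, Fintype.card_coe]

/-- Courant–Fischer-type counting: if the quadratic form of a Hermitian matrix is `≥ c‖x‖²`
on a subspace `T`, then at least `finrank T` eigenvalues are `≥ c`. -/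
lemma card_ge_of_subspace {A : Matrix (Fin m) (Fin m) ℂ} (hA : A.IsHermitian) {c : ℝ}
    (T : Submodule ℂ (EuclideanSpace ℂ (Fin m)))
    (h : ∀ x ∈ T, c * ‖x‖ ^ 2 ≤ (⟪x, toEuclideanLin A x⟫).re) :
    Module.finrank ℂ T ≤ (Finset.univ.filter fun i => c ≤ hA.eigenvalues i).card := by
  by_contra hlt
  push_neg at hlt
  set P := Finset.univ.filter fun i => c ≤ hA.eigenvalues i with hPdef
  set W := Submodule.span ℂ (⇑hA.eigenvectorBasis '' ↑Pᶜ) with hWdef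
  have hW : Module.finrank ℂ W = Pᶜ.card := span_image_finset_finrank hA Pᶜ
  have hPc : Pᶜ.card = m - P.card := by
    rw [Finset.card_compl]; simp
  have hsum := Submodule.finrank_sup_add_finrank_inf_eq W T
  have hle : Module.finrank ℂ ↥(W ⊔ T) ≤ m := by
    simpa using Submodule.finrank_le (W ⊔ T)
  have hPm : P.card ≤ m := by simpa using Finset.card_le_univ P
  have hpos : 0 < Module.finrank ℂ ↥(W ⊓ T) := by omega
  obtain ⟨⟨x, hxWT⟩, hx0⟩ := Module.finrank_pos_iff_exists_ne_zero.1 hpos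
  have hx0' : x ≠ 0 := fun h => hx0 (by simpa using h)
  have hxW : x ∈ W := hxWT.1
  have hxT : x ∈ T := hxWT.2
  have h1 := h x hxT
  have h2 := quad_lt hA (P := P) (fun i hi => by
    simp only [hPdef, Finset.mem_filter, Finset.mem_univ, true_and] at hi
    exact lt_of_not_ge hi) hxW hx0'
  linarith

end SandwichAux

/-- If `Z Z*` has at least `r` eigenvalues `≥ a₁ > 0` and the Hermitian matrix `Σ` has at
least `s` eigenvalues `≥ a₂ > 0`, then `Z Σ Z*` has at least `r + s − d` eigenvalues
`≥ a₁ a₂` (all eigenvalues counted with multiplicity). -/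
theorem eigs_ge_of_sandwich {n d : ℕ} {S : Matrix (Fin d) (Fin d) ℂ} (hS : S.IsHermitian)
    (Z : Matrix (Fin n) (Fin d) ℂ) {r s : ℕ} {a₁ a₂ : ℝ} (ha₁ : 0 < a₁) (ha₂ : 0 < a₂)
    (hr : r ≤ (Finset.univ.filter fun i =>
      a₁ ≤ (Matrix.isHermitian_mul_conjTranspose_self Z).eigenvalues i).card)
    (hs : s ≤ (Finset.univ.filter fun i => a₂ ≤ hS.eigenvalues i).card) :
    r + s - d ≤ (Finset.univ.filter fun i =>
      a₁ * a₂ ≤ (Matrix.isHermitian_mul_mul_conjTranspose Z hS).eigenvalues i).card := by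
  set hA := Matrix.isHermitian_mul_conjTranspose_self Z with hAdef
  set hB := Matrix.isHermitian_mul_mul_conjTranspose Z hS with hBdef
  set P₁ := Finset.univ.filter fun i => a₁ ≤ hA.eigenvalues i with hP₁
  set P₂ := Finset.univ.filter fun i => a₂ ≤ hS.eigenvalues i with hP₂
  set U := Submodule.span ℂ (⇑hA.eigenvectorBasis '' ↑P₁) with hUdef
  set V := Submodule.span ℂ (⇑hS.eigenvectorBasis '' ↑P₂) with hVdef
  set f : EuclideanSpace ℂ (Fin n) →ₗ[ℂ] EuclideanSpace ℂ (Fin d) := toEuclideanLin Zᴴ with hfdef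
  set T := U ⊓ Submodule.comap f V with hTdef
  -- Key quadratic form identities
  have key1 : ∀ x : EuclideanSpace ℂ (Fin n),
      (inner ℂ x (toEuclideanLin (Z * Zᴴ) x) : ℂ) = inner ℂ (f x) (f x) := by
    intro x
    rw [EuclideanSpace.inner_eq_star_dotProduct, EuclideanSpace.inner_eq_star_dotProduct]
    simp only [hfdef, ofLp_toEuclideanLin_apply]
    rw [dotProduct_comm _ (star x.ofLp), dotProduct_comm _ (star (Zᴴ *ᵥ x.ofLp))]
    rw [← Matrix.mulVec_mulVec, Matrix.dotProduct_mulVec, Matrix.star_mulVec,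
      Matrix.conjTranspose_conjTranspose]
  have key2 : ∀ x : EuclideanSpace ℂ (Fin n),
      (inner ℂ x (toEuclideanLin (Z * S * Zᴴ) x) : ℂ)
        = inner ℂ (f x) (toEuclideanLin S (f x)) := by
    intro x
    rw [EuclideanSpace.inner_eq_star_dotProduct, EuclideanSpace.inner_eq_star_dotProduct]
    simp only [hfdef, ofLp_toEuclideanLin_apply]
    rw [dotProduct_comm _ (star x.ofLp), dotProduct_comm _ (star (Zᴴ *ᵥ x.ofLp))]
    rw [Matrix.mul_assoc, ← Matrix.mulVec_mulVec, Matrix.dotProduct_mulVec, Matrix.star_mulVec,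
      Matrix.conjTranspose_conjTranspose, ← Matrix.mulVec_mulVec]
  -- the quadratic form bound on T
  have hquad : ∀ x ∈ T, (a₁ * a₂) * ‖x‖ ^ 2 ≤ (inner ℂ x (toEuclideanLin (Z * S * Zᴴ) x) : ℂ).re := by
    intro x hx
    have hxU : x ∈ U := hx.1
    have hxV : f x ∈ V := hx.2
    have h1 : a₁ * ‖x‖ ^ 2 ≤ ‖f x‖ ^ 2 := by
      have := SandwichAux.quad_ge hA (P := P₁) (fun i hi => (Finset.mem_filter.1 hi).2) hxU
      rw [key1 x, inner_self_eq_norm_sq_to_K] at this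
      simpa [← Complex.ofReal_pow] using this
    have h2 : a₂ * ‖f x‖ ^ 2 ≤ (inner ℂ (f x) (toEuclideanLin S (f x)) : ℂ).re :=
      SandwichAux.quad_ge hS (P := P₂) (fun i hi => (Finset.mem_filter.1 hi).2) hxV
    rw [key2 x]
    nlinarith [sq_nonneg ‖x‖, sq_nonneg ‖f x‖]
  have hmain := SandwichAux.card_ge_of_subspace hB T hquad
  -- dimension counting
  have hU : Module.finrank ℂ U = P₁.card := SandwichAux.span_image_finset_finrank hA P₁
  have hV : Module.finrank ℂ V = P₂.card := SandwichAux.span_image_finset_finrank hS P₂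
  set g : EuclideanSpace ℂ (Fin n) →ₗ[ℂ] (EuclideanSpace ℂ (Fin d) ⧸ V) := V.mkQ ∘ₗ f with hgdef
  have hker : LinearMap.ker g = Submodule.comap f V := by
    rw [hgdef, LinearMap.ker_comp, Submodule.ker_mkQ]
  have hrk := LinearMap.finrank_range_add_finrank_ker g
  rw [hker] at hrk
  have hrange : Module.finrank ℂ (LinearMap.range g) ≤ Module.finrank ℂ (EuclideanSpace ℂ (Fin d) ⧸ V) :=
    Submodule.finrank_le _ |>.trans_eq rfl
  have hquot := Submodule.finrank_quotient_add_finrank V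
  have hsum := Submodule.finrank_sup_add_finrank_inf_eq U (Submodule.comap f V)
  have hle : Module.finrank ℂ ↥(U ⊔ Submodule.comap f V) ≤ n := by
    simpa using Submodule.finrank_le (U ⊔ Submodule.comap f V)
  have hn : Module.finrank ℂ (EuclideanSpace ℂ (Fin n)) = n := by simp
  have hd : Module.finrank ℂ (EuclideanSpace ℂ (Fin d)) = d := by simp
  rw [hn] at hrk
  rw [hd] at hquot
  have hT : Module.finrank ℂ ↥T = Module.finrank ℂ ↥(U ⊓ Submodule.comap f V) := rfl
  omega
end

section
/- Let Σ be a d×d Hermitian matrix and Z an n×d complex matrix. Suppose Z Z* has at least r eigenvalues ≤ b₁, and Σ has at least s eigenvalues ≤ b₂ with b₂ > 0 and b₁ ≥ 0. Then Z Σ Z* has at least r + s − d eigenvalues that are ≤ b₁·b₂. -/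
open Matrix Finset

open scoped InnerProductSpace

variable {m : ℕ}

variable {m : ℕ}

lemma apply_eigBasis {A : Matrix (Fin m) (Fin m) ℂ} (hA : A.IsHermitian) (j : Fin m) :
    Matrix.toEuclideanLin A (hA.eigenvectorBasis j) =
      (hA.eigenvalues j : ℂ) • hA.eigenvectorBasis j := by
  apply (WithLp.equiv 2 _).injective
  simpa [Matrix.toEuclideanLin_apply] using hA.mulVec_eigenvectorBasis j

lemma qf_expand {A : Matrix (Fin m) (Fin m) ℂ} (hA : A.IsHermitian)
    (x : EuclideanSpace ℂ (Fin m)) :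
    Complex.re ⟪x, Matrix.toEuclideanLin A x⟫_ℂ =
      ∑ i, hA.eigenvalues i * ‖hA.eigenvectorBasis.repr x i‖ ^ 2 := by
  set b := hA.eigenvectorBasis
  have hx : Matrix.toEuclideanLin A x
      = ∑ i, (b.repr x i * (hA.eigenvalues i : ℂ)) • b i := by
    conv_lhs => rw [← b.sum_repr x]
    rw [map_sum]
    simp_rw [_root_.map_smul, show ∀ j, Matrix.toEuclideanLin A (b j) = (hA.eigenvalues j : ℂ) • b j from apply_eigBasis hA, smul_smul]
  rw [hx, inner_sum]
  rw [Complex.re_sum]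
  refine Finset.sum_congr rfl fun i _ => ?_
  rw [inner_smul_right]
  have hbx : ⟪x, b i⟫_ℂ = starRingEnd ℂ (b.repr x i) := by
    rw [b.repr_apply_apply x i]
    exact (inner_conj_symm (𝕜 := ℂ) x (b i)).symm
  rw [hbx]
  have : b.repr x i * (hA.eigenvalues i : ℂ) * starRingEnd ℂ (b.repr x i)
      = (hA.eigenvalues i : ℂ) * (b.repr x i * starRingEnd ℂ (b.repr x i)) := by ring
  rw [this, Complex.mul_conj']
  simp [Complex.normSq_eq_norm_sq, sq]

lemma norm_expand (b : OrthonormalBasis (Fin m) ℂ (EuclideanSpace ℂ (Fin m)))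
    (x : EuclideanSpace ℂ (Fin m)) :
    ‖x‖ ^ 2 = ∑ i, ‖b.repr x i‖ ^ 2 := by
  rw [← b.repr.norm_map x, EuclideanSpace.norm_eq]
  rw [Real.sq_sqrt (by positivity)]

lemma repr_eq_zero_of_mem_span (b : OrthonormalBasis (Fin m) ℂ (EuclideanSpace ℂ (Fin m)))
    (T : Finset (Fin m)) {x : EuclideanSpace ℂ (Fin m)}
    (hx : x ∈ Submodule.span ℂ (b '' ↑T)) {i : Fin m} (hi : i ∉ T) :
    b.repr x i = 0 := by
  induction hx using Submodule.span_induction with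
  | mem y hy =>
    obtain ⟨j, hj, rfl⟩ := hy
    rw [b.repr_self]
    rw [EuclideanSpace.single_apply]
    have : i ≠ j := fun h => hi (h ▸ hj)
    simp [this]
  | zero => simp
  | add y z _ _ hy hz => rw [map_add]; simp [hy, hz]
  | smul a y _ hy => rw [_root_.map_smul]; simp [hy]

lemma finrank_span_orthonormal (b : OrthonormalBasis (Fin m) ℂ (EuclideanSpace ℂ (Fin m)))
    (T : Finset (Fin m)) :
    Module.finrank ℂ (Submodule.span ℂ (b '' ↑T)) = T.card := by
  classical
  have hinj : Function.Injective b := b.orthonormal.linearIndependent.injective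
  have h1 : (b '' ↑T) = ↑(T.image b) := by simp [Finset.coe_image]
  rw [h1, finrank_span_finset_eq_card, Finset.card_image_of_injective _ hinj]
  refine (LinearIndependent.linearIndepOn_id b.orthonormal.linearIndependent).mono ?_
  intro y hy
  obtain ⟨j, _, rfl⟩ := Finset.mem_image.mp (Finset.mem_coe.mp hy)
  exact Set.mem_range_self j

lemma finrank_le_card_eigs {A : Matrix (Fin m) (Fin m) ℂ} (hA : A.IsHermitian) {c : ℝ}
    (V : Submodule ℂ (EuclideanSpace ℂ (Fin m)))
    (hV : ∀ x ∈ V, Complex.re ⟪x, Matrix.toEuclideanLin A x⟫_ℂ ≤ c * ‖x‖ ^ 2) :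
    Module.finrank ℂ V ≤ (univ.filter fun i => hA.eigenvalues i ≤ c).card := by
  by_contra hcon
  push_neg at hcon
  set b := hA.eigenvectorBasis with hb
  set T := (univ.filter fun i => hA.eigenvalues i ≤ c) with hT
  set W := Submodule.span ℂ (b '' ↑Tᶜ) with hW
  have hWrank : Module.finrank ℂ W = Tᶜ.card := finrank_span_orthonormal b Tᶜ
  have hcard : T.card + Tᶜ.card = m := by
    simpa using Finset.card_add_card_compl T
  have hdim := Submodule.finrank_sup_add_finrank_inf_eq V W
  have htop : Module.finrank ℂ ↥(V ⊔ W) ≤ m := by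
    have h2 := Submodule.finrank_le (V ⊔ W)
    rwa [finrank_euclideanSpace_fin] at h2
  have hpos : 0 < Module.finrank ℂ ↥(V ⊓ W) := by omega
  have hne : V ⊓ W ≠ ⊥ := by
    intro hbot
    rw [hbot, finrank_bot] at hpos
    exact lt_irrefl 0 hpos
  obtain ⟨x, hxVW, hx0⟩ := Submodule.exists_mem_ne_zero_of_ne_bot hne
  have hxV : x ∈ V := hxVW.1
  have hxW : x ∈ W := hxVW.2
  have hzero : ∀ i ∈ T, b.repr x i = 0 := fun i hi =>
    repr_eq_zero_of_mem_span b Tᶜ hxW (by simpa using hi)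
  have hex : ∃ i, b.repr x i ≠ 0 := by
    by_contra hall
    push_neg at hall
    apply hx0
    have : b.repr x = 0 := by
      apply PiLp.ext
      intro i
      simpa using hall i
    simpa using b.repr.map_eq_zero_iff.mp this
  obtain ⟨i₀, hi₀⟩ := hex
  have hi₀T : i₀ ∉ T := fun h => hi₀ (hzero i₀ h)
  have hkey : c * ‖x‖ ^ 2 < Complex.re ⟪x, Matrix.toEuclideanLin A x⟫_ℂ := by
    rw [qf_expand hA x, norm_expand b x, Finset.mul_sum]
    apply Finset.sum_lt_sum
    · intro i _
      by_cases hi : i ∈ T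
      · rw [hzero i hi]; simp
      · have : c < hA.eigenvalues i := by
          by_contra hle
          exact hi (by simp [hT, not_lt.mp hle])
        exact mul_le_mul_of_nonneg_right this.le (sq_nonneg _)
    · refine ⟨i₀, Finset.mem_univ _, ?_⟩
      have hc : c < hA.eigenvalues i₀ := by
        by_contra hle
        exact hi₀T (by simp [hT, not_lt.mp hle])
      have hn : 0 < ‖b.repr x i₀‖ := norm_pos_iff.mpr hi₀
      have hpos2 : 0 < ‖b.repr x i₀‖ ^ 2 := by positivity
      exact mul_lt_mul_of_pos_right hc hpos2
  exact absurd (hV x hxV) (not_le.mpr hkey)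

lemma exists_subspace_eigs {A : Matrix (Fin m) (Fin m) ℂ} (hA : A.IsHermitian) {c : ℝ} :
    ∃ V : Submodule ℂ (EuclideanSpace ℂ (Fin m)),
      (univ.filter fun i => hA.eigenvalues i ≤ c).card = Module.finrank ℂ V ∧
      ∀ x ∈ V, Complex.re ⟪x, Matrix.toEuclideanLin A x⟫_ℂ ≤ c * ‖x‖ ^ 2 := by
  set T := (univ.filter fun i => hA.eigenvalues i ≤ c) with hT
  refine ⟨Submodule.span ℂ (hA.eigenvectorBasis '' ↑T),
    (finrank_span_orthonormal _ _).symm, fun x hx => ?_⟩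
  rw [qf_expand hA x, norm_expand hA.eigenvectorBasis x, Finset.mul_sum]
  refine Finset.sum_le_sum fun i _ => ?_
  by_cases hi : i ∈ T
  · have : hA.eigenvalues i ≤ c := (Finset.mem_filter.mp hi).2
    exact mul_le_mul_of_nonneg_right this (sq_nonneg _)
  · rw [repr_eq_zero_of_mem_span _ T hx hi]; simp

/-- If `Z Z*` has at least `r` eigenvalues `≤ b₁` (with `b₁ ≥ 0`) and the Hermitian matrix
`Σ` has at least `s` eigenvalues `≤ b₂` with `b₂ > 0`, then `Z Σ Z*` has at least
`r + s − d` eigenvalues `≤ b₁ b₂` (all eigenvalues counted with multiplicity). -/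
theorem eigs_le_of_sandwich {n d : ℕ} {S : Matrix (Fin d) (Fin d) ℂ} (hS : S.IsHermitian)
    (Z : Matrix (Fin n) (Fin d) ℂ) {r s : ℕ} {b₁ b₂ : ℝ} (hb₁ : 0 ≤ b₁) (hb₂ : 0 < b₂)
    (hr : r ≤ (Finset.univ.filter fun i =>
      (Matrix.isHermitian_mul_conjTranspose_self Z).eigenvalues i ≤ b₁).card)
    (hs : s ≤ (Finset.univ.filter fun i => hS.eigenvalues i ≤ b₂).card) :
    r + s - d ≤ (Finset.univ.filter fun i =>
      (Matrix.isHermitian_mul_mul_conjTranspose Z hS).eigenvalues i ≤ b₁ * b₂).card := by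
  classical
  obtain ⟨V₁, hV₁card, hV₁⟩ :=
    exists_subspace_eigs (Matrix.isHermitian_mul_conjTranspose_self Z) (c := b₁)
  obtain ⟨V₂, hV₂card, hV₂⟩ := exists_subspace_eigs hS (c := b₂)
  set L := Matrix.toEuclideanLin Zᴴ with hL
  set U := V₂.comap L with hU
  have hadj : Matrix.toEuclideanLin Z = LinearMap.adjoint L := by
    rw [hL, ← Matrix.toEuclideanLin_conjTranspose_eq_adjoint, conjTranspose_conjTranspose]
  have hZ1 : ∀ x : EuclideanSpace ℂ (Fin n),
      Complex.re ⟪x, Matrix.toEuclideanLin (Z * Zᴴ) x⟫_ℂ = ‖L x‖ ^ 2 := by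
    intro x
    have hcomp : Matrix.toEuclideanLin (Z * Zᴴ) x = Matrix.toEuclideanLin Z (L x) := by
      apply (WithLp.equiv 2 _).injective
      simp [hL, Matrix.toEuclideanLin_apply, Matrix.mulVec_mulVec]
    rw [hcomp, hadj, LinearMap.adjoint_inner_right]
    have := inner_self_eq_norm_sq (𝕜 := ℂ) (L x)
    simpa using this
  have hZ2 : ∀ x : EuclideanSpace ℂ (Fin n),
      ⟪x, Matrix.toEuclideanLin (Z * S * Zᴴ) x⟫_ℂ
        = ⟪L x, Matrix.toEuclideanLin S (L x)⟫_ℂ := by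
    intro x
    have hcomp : Matrix.toEuclideanLin (Z * S * Zᴴ) x
        = Matrix.toEuclideanLin Z (Matrix.toEuclideanLin S (L x)) := by
      apply (WithLp.equiv 2 _).injective
      simp [hL, Matrix.toEuclideanLin_apply, Matrix.mulVec_mulVec]
    rw [hcomp, hadj, LinearMap.adjoint_inner_right]
  have hbound : ∀ x ∈ V₁ ⊓ U,
      Complex.re ⟪x, Matrix.toEuclideanLin (Z * S * Zᴴ) x⟫_ℂ ≤ (b₁ * b₂) * ‖x‖ ^ 2 := by
    intro x hx
    have hx1 : x ∈ V₁ := hx.1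
    have hx2 : L x ∈ V₂ := hx.2
    have h1 : ‖L x‖ ^ 2 ≤ b₁ * ‖x‖ ^ 2 := by rw [← hZ1 x]; exact hV₁ x hx1
    have h2 : Complex.re ⟪L x, Matrix.toEuclideanLin S (L x)⟫_ℂ ≤ b₂ * ‖L x‖ ^ 2 :=
      hV₂ _ hx2
    calc Complex.re ⟪x, Matrix.toEuclideanLin (Z * S * Zᴴ) x⟫_ℂ
        = Complex.re ⟪L x, Matrix.toEuclideanLin S (L x)⟫_ℂ := by rw [hZ2 x]
      _ ≤ b₂ * ‖L x‖ ^ 2 := h2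
      _ ≤ b₂ * (b₁ * ‖x‖ ^ 2) := by
          exact mul_le_mul_of_nonneg_left h1 hb₂.le
      _ = (b₁ * b₂) * ‖x‖ ^ 2 := by ring
  have hmain := finrank_le_card_eigs (Matrix.isHermitian_mul_mul_conjTranspose Z hS)
    (V₁ ⊓ U) hbound
  -- dimension counting
  have hker : LinearMap.ker (V₂.mkQ ∘ₗ L) = U := by
    rw [LinearMap.ker_comp, Submodule.ker_mkQ]
  have hrn := LinearMap.finrank_range_add_finrank_ker (V₂.mkQ ∘ₗ L)
  rw [hker, finrank_euclideanSpace_fin] at hrn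
  have hquot := Submodule.finrank_quotient_add_finrank V₂
  rw [finrank_euclideanSpace_fin] at hquot
  have hrange : Module.finrank ℂ ↥(LinearMap.range (V₂.mkQ ∘ₗ L))
      ≤ Module.finrank ℂ (EuclideanSpace ℂ (Fin d) ⧸ V₂) := Submodule.finrank_le _
  have hsup := Submodule.finrank_sup_add_finrank_inf_eq V₁ U
  have hsupl : Module.finrank ℂ ↥(V₁ ⊔ U) ≤ n := by
    have h2 := Submodule.finrank_le (V₁ ⊔ U)
    rwa [finrank_euclideanSpace_fin] at h2
  omega
end

section
/- Let Z ∈ ℂ^{n×d} and let Σ ∈ ℂ^{d×d} be positive semidefinite. Then for every 1 ≤ i ≤ min(n,d), λ_{i+d−min(n,d)}(Σ) · λ_{min(n,d)}(Z*Z) ≤ λ_i(Σ^{1/2} Z* Z Σ^{1/2}) ≤ λ_i(Σ) · λ_1(Z*Z), where λ_j denotes the j-th largest eigenvalue. -/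
open Matrix
open scoped ComplexOrder

/-- The `i`-th largest eigenvalue (1-based index `i.val + 1`, i.e. index `0` is the largest)
of a Hermitian matrix. -/
noncomputable def eigDesc {K : Type*} [RCLike K] {m : ℕ} {A : Matrix (Fin m) (Fin m) K}
    (hA : A.IsHermitian) (i : Fin m) : ℝ :=
  hA.eigenvalues (Tuple.sort hA.eigenvalues i.rev)

/-- The square root of a positive semidefinite matrix, as defined in Mathlib (Dec 2024). -/
noncomputable def Matrix.PosSemidef.sqrt {n : Type*} [Fintype n] [DecidableEq n] {𝕜 : Type*}
    [RCLike 𝕜] {A : Matrix n n 𝕜} (hA : A.PosSemidef) : Matrix n n 𝕜 :=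
  hA.1.eigenvectorUnitary.1 * diagonal ((↑) ∘ (√·) ∘ hA.1.eigenvalues) *
    (star hA.1.eigenvectorUnitary : Matrix n n 𝕜)

lemma Matrix.PosSemidef.sqrt_isHermitian_old {n : Type*} [Fintype n] [DecidableEq n] {𝕜 : Type*}
    [RCLike 𝕜] {A : Matrix n n 𝕜} (hA : A.PosSemidef) : hA.sqrt.IsHermitian := by
  have h := Matrix.isHermitian_mul_mul_conjTranspose hA.1.eigenvectorUnitary.1
    (isHermitian_diagonal_of_self_adjoint
      (((↑) : ℝ → 𝕜) ∘ (√·) ∘ hA.1.eigenvalues) (by ext i; simp))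
  exact h

lemma Matrix.PosSemidef.sqrt_mul_self {n : Type*} [Fintype n] [DecidableEq n] {𝕜 : Type*}
    [RCLike 𝕜] {A : Matrix n n 𝕜} (hA : A.PosSemidef) : hA.sqrt * hA.sqrt = A := by
  unfold Matrix.PosSemidef.sqrt
  conv_rhs => rw [hA.1.spectral_theorem, Unitary.conjStarAlgAut_apply]
  have hU : (star hA.1.eigenvectorUnitary : Matrix n n 𝕜) * hA.1.eigenvectorUnitary.1 = 1 := by
    simp
  rw [show ∀ a b c d e f : Matrix n n 𝕜, a * b * c * (d * e * f) = a * (b * (c * d) * e) * f from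
    fun _ _ _ _ _ _ => by simp only [mul_assoc], hU, mul_one, diagonal_mul_diagonal]
  congr 3
  funext i
  simp [← RCLike.ofReal_mul, Real.mul_self_sqrt (hA.eigenvalues_nonneg i)]

open Module

noncomputable section
namespace OstAux

variable {m : ℕ} {A : Matrix (Fin m) (Fin m) ℂ}

/-- sorted (increasing) eigenbasis -/
def sb (hA : A.IsHermitian) : OrthonormalBasis (Fin m) ℂ (EuclideanSpace ℂ (Fin m)) :=
  hA.eigenvectorBasis.reindex (Tuple.sort hA.eigenvalues).symm

def sμ (hA : A.IsHermitian) : Fin m → ℝ := hA.eigenvalues ∘ Tuple.sort hA.eigenvalues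

lemma sμ_mono (hA : A.IsHermitian) : Monotone (sμ hA) := Tuple.monotone_sort _

lemma sb_apply (hA : A.IsHermitian) (j : Fin m) :
    sb hA j = hA.eigenvectorBasis (Tuple.sort hA.eigenvalues j) := by
  simp [sb]

lemma T_sb (hA : A.IsHermitian) (j : Fin m) :
    toEuclideanLin A (sb hA j) = (sμ hA j : ℂ) • sb hA j := by
  have h := hA.mulVec_eigenvectorBasis (Tuple.sort hA.eigenvalues j)
  apply (WithLp.equiv 2 _).injective
  ext k
  have := congrFun h k
  simp only [sb_apply, ofLp_toLpLin]
  simpa [sμ, Complex.real_smul] using this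

variable (hA : A.IsHermitian)

lemma repr_T (x : EuclideanSpace ℂ (Fin m)) (j : Fin m) :
    (sb hA).repr (toEuclideanLin A x) j = (sμ hA j : ℂ) * (sb hA).repr x j := by
  rw [OrthonormalBasis.repr_apply_apply, OrthonormalBasis.repr_apply_apply,
    ← (Matrix.isHermitian_iff_isSymmetric.1 hA) (sb hA j) x, T_sb, inner_smul_left]
  simp

lemma re_inner_T (x : EuclideanSpace ℂ (Fin m)) :
    RCLike.re (inner ℂ x (toEuclideanLin A x) : ℂ) =
      ∑ j, sμ hA j * ‖(sb hA).repr x j‖ ^ 2 := by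
  rw [← (sb hA).repr.inner_map_map x (toEuclideanLin A x), PiLp.inner_apply]
  rw [map_sum]
  congr 1
  ext j
  rw [repr_T]
  simp only [RCLike.inner_apply]
  rw [show (sμ hA j : ℂ) * (sb hA).repr x j * (starRingEnd ℂ) ((sb hA).repr x j)
      = (sμ hA j : ℂ) * ((starRingEnd ℂ) ((sb hA).repr x j) * (sb hA).repr x j) by ring,
    RCLike.conj_mul]
  simp [← Complex.ofReal_pow]

lemma norm_sq_eq (x : EuclideanSpace ℂ (Fin m)) :
    ‖x‖ ^ 2 = ∑ j, ‖(sb hA).repr x j‖ ^ 2 := by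
  rw [← (sb hA).repr.norm_map x, EuclideanSpace.norm_eq, Real.sq_sqrt]
  positivity


/-- span of eigenvectors indexed by `S` -/
def Vspan (hA : A.IsHermitian) (S : Finset (Fin m)) : Submodule ℂ (EuclideanSpace ℂ (Fin m)) :=
  Submodule.span ℂ (Set.range (fun j : S => sb hA j))

lemma finrank_Vspan (S : Finset (Fin m)) : finrank ℂ (Vspan hA S) = S.card := by
  rw [Vspan, finrank_span_eq_card]
  · exact Fintype.card_coe S
  · exact ((sb hA).orthonormal.comp _ Subtype.val_injective).linearIndependent

lemma repr_eq_zero_of_mem_Vspan {S : Finset (Fin m)} {x : EuclideanSpace ℂ (Fin m)}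
    (hx : x ∈ Vspan hA S) {j : Fin m} (hj : j ∉ S) : (sb hA).repr x j = 0 := by
  induction hx using Submodule.span_induction with
  | mem y hy =>
    obtain ⟨⟨i, hi⟩, rfl⟩ := hy
    rw [OrthonormalBasis.repr_apply_apply]
    exact (sb hA).orthonormal.2 (fun h => hj (h ▸ hi))
  | zero => simp
  | add y z _ _ hy hz => simp [hy, hz]
  | smul c y _ hy => simp [hy]

lemma quad_le_of_mem (hA : A.IsHermitian) {S : Finset (Fin m)} {t : ℝ}
    (hS : ∀ j ∈ S, sμ hA j ≤ t) {x : EuclideanSpace ℂ (Fin m)} (hx : x ∈ Vspan hA S) :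
    RCLike.re (inner ℂ x (toEuclideanLin A x) : ℂ) ≤ t * ‖x‖ ^ 2 := by
  rw [re_inner_T, norm_sq_eq hA, Finset.mul_sum]
  refine Finset.sum_le_sum fun j _ => ?_
  by_cases hj : j ∈ S
  · exact mul_le_mul_of_nonneg_right (hS j hj) (by positivity)
  · simp [repr_eq_zero_of_mem_Vspan hA hx hj]

lemma quad_ge_of_mem (hA : A.IsHermitian) {S : Finset (Fin m)} {t : ℝ}
    (hS : ∀ j ∈ S, t ≤ sμ hA j) {x : EuclideanSpace ℂ (Fin m)} (hx : x ∈ Vspan hA S) :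
    t * ‖x‖ ^ 2 ≤ RCLike.re (inner ℂ x (toEuclideanLin A x) : ℂ) := by
  rw [re_inner_T, norm_sq_eq hA, Finset.mul_sum]
  refine Finset.sum_le_sum fun j _ => ?_
  by_cases hj : j ∈ S
  · exact mul_le_mul_of_nonneg_right (hS j hj) (by positivity)
  · simp [repr_eq_zero_of_mem_Vspan hA hx hj]

lemma exists_ne_zero_inf (V W : Submodule ℂ (EuclideanSpace ℂ (Fin m)))
    (h : m + 1 ≤ finrank ℂ V + finrank ℂ W) : ∃ x, x ∈ V ∧ x ∈ W ∧ x ≠ 0 := by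
  have h1 : finrank ℂ (V ⊔ W : Submodule ℂ (EuclideanSpace ℂ (Fin m))) ≤ m := by
    simpa using Submodule.finrank_le (V ⊔ W)
  have h2 := Submodule.finrank_sup_add_finrank_inf_eq V W
  have h3 : 0 < finrank ℂ (V ⊓ W : Submodule ℂ (EuclideanSpace ℂ (Fin m))) := by omega
  have h4 : (V ⊓ W : Submodule ℂ (EuclideanSpace ℂ (Fin m))) ≠ ⊥ := by
    intro hb
    rw [hb, finrank_bot] at h3
    omega
  obtain ⟨x, hx, hx0⟩ := Submodule.exists_mem_ne_zero_of_ne_bot h4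
  exact ⟨x, hx.1, hx.2, hx0⟩

lemma le_eigDesc (hA : A.IsHermitian) {k : Fin m} {V : Submodule ℂ (EuclideanSpace ℂ (Fin m))}
    (hV : k.val + 1 ≤ finrank ℂ V) {t : ℝ}
    (h : ∀ x ∈ V, t * ‖x‖ ^ 2 ≤ RCLike.re (inner ℂ x (toEuclideanLin A x) : ℂ)) :
    t ≤ eigDesc hA k := by
  obtain ⟨x, hxV, hxW, hx0⟩ := exists_ne_zero_inf V (Vspan hA (Finset.Iic k.rev)) (by
    rw [finrank_Vspan, Fin.card_Iic, Fin.val_rev]; omega)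
  have h1 := h x hxV
  have h2 : RCLike.re (inner ℂ x (toEuclideanLin A x) : ℂ) ≤ eigDesc hA k * ‖x‖ ^ 2 :=
    quad_le_of_mem hA (fun j hj => sμ_mono hA (Finset.mem_Iic.1 hj)) hxW
  have h3 : (0:ℝ) < ‖x‖ ^ 2 := by
    have := norm_pos_iff.2 hx0
    positivity
  nlinarith

lemma eigDesc_le (hA : A.IsHermitian) {k : Fin m} {W : Submodule ℂ (EuclideanSpace ℂ (Fin m))}
    (hW : m - k.val ≤ finrank ℂ W) {t : ℝ}
    (h : ∀ x ∈ W, RCLike.re (inner ℂ x (toEuclideanLin A x) : ℂ) ≤ t * ‖x‖ ^ 2) :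
    eigDesc hA k ≤ t := by
  obtain ⟨x, hxV, hxW, hx0⟩ := exists_ne_zero_inf (Vspan hA (Finset.Ici k.rev)) W (by
    rw [finrank_Vspan, Fin.card_Ici, Fin.val_rev]; omega)
  have h1 := h x hxW
  have h2 : eigDesc hA k * ‖x‖ ^ 2 ≤ RCLike.re (inner ℂ x (toEuclideanLin A x) : ℂ) :=
    quad_ge_of_mem hA (fun j hj => sμ_mono hA (Finset.mem_Ici.1 hj)) hxV
  have h3 : (0:ℝ) < ‖x‖ ^ 2 := by
    have := norm_pos_iff.2 hx0
    positivity
  nlinarith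


lemma quad_le_top (hA : A.IsHermitian) (hm : 0 < m) (y : EuclideanSpace ℂ (Fin m)) :
    RCLike.re (inner ℂ y (toEuclideanLin A y) : ℂ) ≤ eigDesc hA ⟨0, hm⟩ * ‖y‖ ^ 2 := by
  rw [re_inner_T hA, norm_sq_eq hA, Finset.mul_sum]
  refine Finset.sum_le_sum fun j _ => mul_le_mul_of_nonneg_right (sμ_mono hA ?_) (by positivity)
  have := j.isLt
  simp only [Fin.le_def, Fin.val_rev]
  omega

lemma finrank_le_finrank_comap (f : EuclideanSpace ℂ (Fin m) →ₗ[ℂ] EuclideanSpace ℂ (Fin m))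
    (W : Submodule ℂ (EuclideanSpace ℂ (Fin m))) : finrank ℂ W ≤ finrank ℂ (W.comap f) := by
  have h1 : W.comap f = LinearMap.ker (W.mkQ ∘ₗ f) := by
    rw [LinearMap.ker_comp, Submodule.ker_mkQ]
  have h2 := LinearMap.finrank_range_add_finrank_ker (W.mkQ ∘ₗ f)
  have h3 : finrank ℂ (LinearMap.range (W.mkQ ∘ₗ f)) ≤
      finrank ℂ (EuclideanSpace ℂ (Fin m) ⧸ W) := Submodule.finrank_le _
  have h4 := Submodule.finrank_quotient_add_finrank W
  rw [h1]
  have h5 : finrank ℂ (EuclideanSpace ℂ (Fin m)) = m := finrank_euclideanSpace_fin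
  omega

lemma toEuclideanLin_mul (M N : Matrix (Fin m) (Fin m) ℂ) (x : EuclideanSpace ℂ (Fin m)) :
    toEuclideanLin (M * N) x = toEuclideanLin M (toEuclideanLin N x) := by
  simp [toEuclideanLin_apply, mulVec_mulVec]

end OstAux
end

lemma sqrt_gram_sqrt_isHermitian {n d : ℕ} (Z : Matrix (Fin n) (Fin d) ℂ)
    {S : Matrix (Fin d) (Fin d) ℂ} (hS : S.PosSemidef) :
    (hS.sqrt * (Zᴴ * Z) * hS.sqrt).IsHermitian := by
  have h2 := Matrix.isHermitian_mul_mul_conjTranspose hS.sqrt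
    (Matrix.isHermitian_conjTranspose_mul_self Z)
  rwa [hS.sqrt_isHermitian_old.eq] at h2

/-- Generalized Ostrowski theorem: for `Z ∈ ℂ^{n×d}` and `Σ ⪰ 0`, for every
`1 ≤ i ≤ min(n,d)`,
`λ_{i+d−min(n,d)}(Σ) λ_{min(n,d)}(Z*Z) ≤ λ_i(Σ^{1/2} Z* Z Σ^{1/2}) ≤ λ_i(Σ) λ_1(Z*Z)`,
where `λ_j` denotes the `j`-th largest eigenvalue. -/
theorem ostrowski_nonsquare {n d : ℕ} (Z : Matrix (Fin n) (Fin d) ℂ)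
    {S : Matrix (Fin d) (Fin d) ℂ} (hS : S.PosSemidef)
    (i : ℕ) (hi1 : 1 ≤ i) (hi2 : i ≤ min n d) :
    eigDesc hS.1 ⟨i + d - min n d - 1, by omega⟩ *
        eigDesc (Matrix.isHermitian_conjTranspose_mul_self Z) ⟨min n d - 1, by omega⟩ ≤
      eigDesc (sqrt_gram_sqrt_isHermitian Z hS) ⟨i - 1, by omega⟩ ∧
    eigDesc (sqrt_gram_sqrt_isHermitian Z hS) ⟨i - 1, by omega⟩ ≤
      eigDesc hS.1 ⟨i - 1, by omega⟩ *
        eigDesc (Matrix.isHermitian_conjTranspose_mul_self Z) ⟨0, by omega⟩ := by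
  have hrd : min n d ≤ d := min_le_right n d
  have hrn : min n d ≤ n := min_le_left n d
  have hd : 1 ≤ d := le_trans hi1 (hi2.trans hrd)
  have hB : (Zᴴ * Z).PosSemidef := Matrix.posSemidef_conjTranspose_mul_self Z
  have hB' : (Zᴴ * Z).IsHermitian := Matrix.isHermitian_conjTranspose_mul_self Z
  have hR : hS.sqrt.IsHermitian := hS.sqrt_isHermitian_old
  have hRsym := Matrix.isHermitian_iff_isSymmetric.1 hR
  have hqM : ∀ x : EuclideanSpace ℂ (Fin d),
      RCLike.re (inner ℂ x (toEuclideanLin (hS.sqrt * (Zᴴ * Z) * hS.sqrt) x) : ℂ)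
        = RCLike.re (inner ℂ (toEuclideanLin hS.sqrt x)
            (toEuclideanLin (Zᴴ * Z) (toEuclideanLin hS.sqrt x)) : ℂ) := by
    intro x
    rw [OstAux.toEuclideanLin_mul, OstAux.toEuclideanLin_mul, ← hRsym]
  have hqS : ∀ x : EuclideanSpace ℂ (Fin d),
      RCLike.re (inner ℂ x (toEuclideanLin S x) : ℂ) = ‖toEuclideanLin hS.sqrt x‖ ^ 2 := by
    intro x
    have h1 : toEuclideanLin S x = toEuclideanLin hS.sqrt (toEuclideanLin hS.sqrt x) := by
      conv_rhs => rw [← OstAux.toEuclideanLin_mul]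
      rw [hS.sqrt_mul_self]
    rw [h1, ← hRsym, inner_self_eq_norm_sq]
  have hB0 : ∀ j : Fin d, 0 ≤ eigDesc hB' j := fun j => hB.eigenvalues_nonneg _
  constructor
  · -- lower bound
    set k₁ : Fin d := ⟨i + d - min n d - 1, by omega⟩ with hk1
    set k₂ : Fin d := ⟨min n d - 1, by omega⟩ with hk2
    set U : Submodule ℂ (EuclideanSpace ℂ (Fin d)) :=
      OstAux.Vspan hS.1 (Finset.Ici k₁.rev) with hU
    set C : Submodule ℂ (EuclideanSpace ℂ (Fin d)) :=
      Submodule.comap (toEuclideanLin hS.sqrt)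
        (OstAux.Vspan hB' (Finset.Ici k₂.rev)) with hC
    have e1 : finrank ℂ U = i + d - min n d := by
      rw [hU, OstAux.finrank_Vspan, Fin.card_Ici, Fin.val_rev, hk1]
      simp only [Fin.val_mk]
      omega
    have e2 : min n d ≤ finrank ℂ C := by
      rw [hC]
      refine le_trans ?_ (OstAux.finrank_le_finrank_comap _ _)
      rw [OstAux.finrank_Vspan, Fin.card_Ici, Fin.val_rev, hk2]
      simp only [Fin.val_mk]
      omega
    refine OstAux.le_eigDesc (sqrt_gram_sqrt_isHermitian Z hS) (V := U ⊓ C) ?_ ?_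
    · have e3 := Submodule.finrank_sup_add_finrank_inf_eq U C
      have e4 : finrank ℂ (U ⊔ C : Submodule ℂ (EuclideanSpace ℂ (Fin d))) ≤ d := by
        have h5 := Submodule.finrank_le (U ⊔ C)
        rwa [finrank_euclideanSpace_fin] at h5
      simp only [Fin.val_mk]
      omega
    · intro x hx
      obtain ⟨hxU, hxW⟩ := hx
      have hxW' := Submodule.mem_comap.1 hxW
      have h1 : eigDesc hS.1 k₁ * ‖x‖ ^ 2 ≤
          RCLike.re (inner ℂ x (toEuclideanLin S x) : ℂ) :=
        OstAux.quad_ge_of_mem hS.1 (fun j hj => OstAux.sμ_mono hS.1 (Finset.mem_Ici.1 hj)) hxU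
      have h2 : eigDesc hB' k₂ * ‖toEuclideanLin hS.sqrt x‖ ^ 2 ≤
          RCLike.re (inner ℂ (toEuclideanLin hS.sqrt x)
            (toEuclideanLin (Zᴴ * Z) (toEuclideanLin hS.sqrt x)) : ℂ) :=
        OstAux.quad_ge_of_mem hB' (fun j hj => OstAux.sμ_mono hB' (Finset.mem_Ici.1 hj)) hxW'
      rw [hqS x] at h1
      rw [hqM x]
      calc eigDesc hS.1 k₁ * eigDesc hB' k₂ * ‖x‖ ^ 2
          = eigDesc hB' k₂ * (eigDesc hS.1 k₁ * ‖x‖ ^ 2) := by ring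
        _ ≤ eigDesc hB' k₂ * ‖toEuclideanLin hS.sqrt x‖ ^ 2 :=
            mul_le_mul_of_nonneg_left h1 (hB0 _)
        _ ≤ _ := h2
  · -- upper bound
    set k₀ : Fin d := ⟨i - 1, by omega⟩ with hk0
    refine OstAux.eigDesc_le (sqrt_gram_sqrt_isHermitian Z hS)
      (W := OstAux.Vspan hS.1 (Finset.Iic k₀.rev)) ?_ ?_
    · rw [OstAux.finrank_Vspan, Fin.card_Iic, Fin.val_rev, hk0]
      simp only [Fin.val_mk]
      omega
    · intro x hx
      have h1 : RCLike.re (inner ℂ x (toEuclideanLin S x) : ℂ) ≤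
          eigDesc hS.1 k₀ * ‖x‖ ^ 2 :=
        OstAux.quad_le_of_mem hS.1 (fun j hj => OstAux.sμ_mono hS.1 (Finset.mem_Iic.1 hj)) hx
      have h2 := OstAux.quad_le_top hB' (by omega) (toEuclideanLin hS.sqrt x)
      rw [hqS x] at h1
      rw [hqM x]
      calc RCLike.re (inner ℂ (toEuclideanLin hS.sqrt x)
            (toEuclideanLin (Zᴴ * Z) (toEuclideanLin hS.sqrt x)) : ℂ)
          ≤ eigDesc hB' ⟨0, by omega⟩ * ‖toEuclideanLin hS.sqrt x‖ ^ 2 := h2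
        _ ≤ eigDesc hB' ⟨0, by omega⟩ * (eigDesc hS.1 k₀ * ‖x‖ ^ 2) :=
            mul_le_mul_of_nonneg_left h1 (hB0 _)
        _ = eigDesc hS.1 k₀ * eigDesc hB' ⟨0, by omega⟩ * ‖x‖ ^ 2 := by ring
end
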